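/- Let L = {x₁,…,x_n} be a finite meet-semilattice, let R be a commutative ring, let k ≥ 2, let 𝓕 : (S_n)^{k-2} → R be any map, and for each x ∈ L fix an element z_x ∈ L with z_x ≤ x and a function F_x : L → R. Define f_x : L → R by f_x(z) = ∑_{y ∈ L} μ(y,z) F_x(y), where μ is the Möbius function of L. Consider the k-dimensional hypermatrix M with entries M_{i₁,…,i_k} = F_{x_{i₁}}(z_{x_{i₁}} ∧ x_{i₂} ∧ ⋯ ∧ x_{i_k}). Then Det_𝓕(M) = 𝓕(Id,…,Id) · ∏_{x ∈ L} f_x(x) if z_x = x for every x ∈ L, and Det_𝓕(M) = 0 otherwise. -/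

import Mathlib

/-- The `𝓕`-determinant of a `k`-dimensional hypermatrix (`k = m + 2`), where the first two
indices are explicit and the remaining `m = k - 2` indices are gathered in a tuple:
`Det_𝓕(M) = ∑_{(σ₂,σ₃,…,σ_k)} sign(σ₂) ⋅ 𝓕(σ₃,…,σ_k) ⋅ ∏_i M_{i,σ₂(i),…,σ_k(i)}`. -/
def DetF {R : Type*} [CommRing R] {n m : ℕ}
    (𝓕 : (Fin m → Equiv.Perm (Fin n)) → R)
    (M : Fin n → Fin n → (Fin m → Fin n) → R) : R :=
  ∑ σ₂ : Equiv.Perm (Fin n), ∑ τ : Fin m → Equiv.Perm (Fin n),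
    ((Equiv.Perm.sign σ₂ : ℤ) : R) * 𝓕 τ * ∏ i : Fin n, M i (σ₂ i) (fun j => τ j i)

/-- The meet `a ⊓ v 0 ⊓ v 1 ⊓ ⋯` of an element `a` with a tuple `v` of elements of a
meet-semilattice. -/
def meetAll {L : Type*} [SemilatticeInf L] {m : ℕ} (a : L) (v : Fin m → L) : L :=
  (List.ofFn v).foldr (· ⊓ ·) a

/-- An injective self-map of a finite poset satisfying `g w ≤ w` is the identity. -/
lemma aux_fix {L : Type*} [PartialOrder L] [Finite L]
    (g : L → L) (hg : Function.Injective g) (h : ∀ w, g w ≤ w) : ∀ w, g w = w := by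
  intro w
  induction w using WellFoundedLT.induction with
  | _ w ih =>
    rcases lt_or_eq_of_le (h w) with hlt | he
    · exact absurd (hg (ih (g w) hlt)) hlt.ne
    · exact he

/-- An injective self-map of a finite poset satisfying `w ≤ g w` is the identity. -/
lemma aux_fix_ge {L : Type*} [PartialOrder L] [Finite L]
    (g : L → L) (hg : Function.Injective g) (h : ∀ w, w ≤ g w) : ∀ w, g w = w :=
  fun w => aux_fix (L := Lᵒᵈ) g hg h w

lemma le_meetAll_iff {L : Type*} [SemilatticeInf L] {m : ℕ} {y a : L} {v : Fin m → L} :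
    y ≤ meetAll a v ↔ y ≤ a ∧ ∀ j, y ≤ v j := by
  have key : ∀ l : List L, y ≤ l.foldr (· ⊓ ·) a ↔ y ≤ a ∧ ∀ b ∈ l, y ≤ b := by
    intro l
    induction l with
    | nil => simp
    | cons b t ih =>
      simp only [List.foldr_cons, le_inf_iff, ih, List.mem_cons]
      constructor
      · rintro ⟨h1, h2, h3⟩
        refine ⟨h2, fun c hc => ?_⟩
        rcases hc with rfl | hc
        · exact h1
        · exact h3 c hc
      · rintro ⟨h1, h2⟩
        exact ⟨h2 b (Or.inl rfl), h1, fun c hc => h2 c (Or.inr hc)⟩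
  rw [meetAll, key]
  simp only [List.mem_ofFn, Set.mem_range, forall_exists_index]
  constructor
  · exact fun ⟨h1, h2⟩ => ⟨h1, fun j => h2 _ j rfl⟩
  · rintro ⟨h1, h2⟩
    exact ⟨h1, fun b j hj => hj ▸ h2 j⟩

/-- Möbius inversion in the form needed: from `fw v = ∑ y, μ(y,v) F y` recover
`F y = ∑_{v ≤ y} fw v`. -/
lemma aux_inv {L R : Type*} [Fintype L] [DecidableEq L] [PartialOrder L]
    [LocallyFiniteOrder L] [CommRing R] [DecidableRel ((· ≤ ·) : L → L → Prop)]
    (F fw : L → R) (hfw : ∀ v, fw v = ∑ y : L, IncidenceAlgebra.mu R y v * F y) (y : L) :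
    F y = ∑ v : L, if v ≤ y then fw v else 0 := by
  classical
  symm
  calc ∑ v : L, (if v ≤ y then fw v else 0)
      = ∑ v : L, ∑ u : L, (if v ≤ y then IncidenceAlgebra.mu R u v * F u else 0) := by
        refine Finset.sum_congr rfl fun v _ => ?_
        split
        · exact hfw v
        · simp
    _ = ∑ u : L, (∑ v : L, if v ≤ y then IncidenceAlgebra.mu R u v else 0) * F u := by
        rw [Finset.sum_comm]
        refine Finset.sum_congr rfl fun u _ => ?_
        rw [Finset.sum_mul]
        refine Finset.sum_congr rfl fun v _ => ?_
        split <;> simp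
    _ = ∑ u : L, (if u = y then 1 else 0) * F u := by
        refine Finset.sum_congr rfl fun u _ => ?_
        congr 1
        have h1 : ∀ v : L, (if v ≤ y then IncidenceAlgebra.mu R u v else 0)
            = (if v ∈ Finset.Icc u y then IncidenceAlgebra.mu R u v else 0) := by
          intro v
          by_cases hvy : v ≤ y
          · by_cases huv : u ≤ v
            · rw [if_pos hvy, if_pos (Finset.mem_Icc.2 ⟨huv, hvy⟩)]
            · rw [if_pos hvy, IncidenceAlgebra.apply_eq_zero_of_not_le huv]
              split <;> rfl
          · rw [if_neg hvy, if_neg (fun hc => hvy (Finset.mem_Icc.1 hc).2)]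
        simp_rw [h1]
        rw [Finset.sum_ite_mem, Finset.univ_inter,
          IncidenceAlgebra.sum_Icc_mu_right (𝕜 := R) u y]
    _ = F y := by simp

/-- Lindström's theorem for `𝓕`-determinants: let `L = {x₁,…,x_n}` be a finite
meet-semilattice, `k = m + 2 ≥ 2`, `𝓕 : (S_n)^(k-2) → R`; for each `w ∈ L` fix `z w ≤ w` and a
function `F w : L → R`, and set `f w v = ∑_{y ∈ L} μ(y,v) F w y`.  Then the `𝓕`-determinant of
the hypermatrix `(F_{x_{i₁}}(z_{x_{i₁}} ∧ x_{i₂} ∧ ⋯ ∧ x_{i_k}))` equals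
`𝓕(Id,…,Id) ⋅ ∏_w f w w` if `z w = w` for all `w`, and `0` otherwise. -/
theorem lindstrom_detF {L R : Type*} [Fintype L] [DecidableEq L] [SemilatticeInf L]
    [LocallyFiniteOrder L] [CommRing R] {n m : ℕ}
    (x : Fin n → L) (hx : Function.Bijective x)
    (𝓕 : (Fin m → Equiv.Perm (Fin n)) → R)
    (z : L → L) (hz : ∀ w, z w ≤ w) (F : L → L → R)
    (f : L → L → R) (hf : ∀ w v, f w v = ∑ y : L, IncidenceAlgebra.mu R y v * F w y) :
    DetF 𝓕 (fun i₁ i₂ t => F (x i₁) (meetAll (z (x i₁) ⊓ x i₂) (fun j => x (t j)))) =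
      if ∀ w, z w = w then 𝓕 (fun _ => 1) * ∏ w : L, f w w else 0 := by
  classical
  set e : Fin n ≃ L := Equiv.ofBijective x hx with he
  -- Step 1: rewrite the matrix entries via Möbius inversion
  have hM : ∀ (i₁ i₂ : Fin n) (t : Fin m → Fin n),
      F (x i₁) (meetAll (z (x i₁) ⊓ x i₂) fun j => x (t j)) =
      ∑ y : L, if y ≤ z (x i₁) ∧ y ≤ x i₂ ∧ ∀ j, y ≤ x (t j) then f (x i₁) y else 0 := by
    intro i₁ i₂ t
    rw [aux_inv (F (x i₁)) (f (x i₁)) (hf (x i₁))]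
    refine Finset.sum_congr rfl fun y _ => ?_
    refine if_congr ?_ rfl rfl
    rw [le_meetAll_iff, le_inf_iff]
    tauto
  -- Step 2: rewrite DetF as a sum over functions g : Fin n → L
  have step2 : DetF 𝓕 (fun i₁ i₂ t => F (x i₁) (meetAll (z (x i₁) ⊓ x i₂) (fun j => x (t j)))) =
      ∑ g : Fin n → L, ∑ σ₂ : Equiv.Perm (Fin n), ∑ τ : Fin m → Equiv.Perm (Fin n),
        ((Equiv.Perm.sign σ₂ : ℤ) : R) * 𝓕 τ *
          ∏ i : Fin n, (if g i ≤ z (x i) ∧ g i ≤ x (σ₂ i) ∧ ∀ j, g i ≤ x (τ j i)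
            then f (x i) (g i) else 0) := by
    rw [DetF]
    have expand : ∀ (σ₂ : Equiv.Perm (Fin n)) (τ : Fin m → Equiv.Perm (Fin n)),
        (∏ i : Fin n, ∑ y : L,
            if y ≤ z (x i) ∧ y ≤ x (σ₂ i) ∧ ∀ j, y ≤ x (τ j i) then f (x i) y else 0) =
        ∑ g : Fin n → L, ∏ i : Fin n,
            (if g i ≤ z (x i) ∧ g i ≤ x (σ₂ i) ∧ ∀ j, g i ≤ x (τ j i)
              then f (x i) (g i) else 0) := by
      intro σ₂ τ
      rw [Finset.prod_univ_sum (fun _ => Finset.univ)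
        (fun i y => if y ≤ z (x i) ∧ y ≤ x (σ₂ i) ∧ ∀ j, y ≤ x (τ j i) then f (x i) y else 0)]
      rw [Fintype.piFinset_univ]
    simp_rw [hM, expand, Finset.mul_sum]
    have swap1 : ∀ σ₂ : Equiv.Perm (Fin n),
        (∑ τ : Fin m → Equiv.Perm (Fin n), ∑ g : Fin n → L,
          ((Equiv.Perm.sign σ₂ : ℤ) : R) * 𝓕 τ *
            ∏ i : Fin n, (if g i ≤ z (x i) ∧ g i ≤ x (σ₂ i) ∧ ∀ j, g i ≤ x (τ j i)
              then f (x i) (g i) else 0)) =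
        ∑ g : Fin n → L, ∑ τ : Fin m → Equiv.Perm (Fin n),
          ((Equiv.Perm.sign σ₂ : ℤ) : R) * 𝓕 τ *
            ∏ i : Fin n, (if g i ≤ z (x i) ∧ g i ≤ x (σ₂ i) ∧ ∀ j, g i ≤ x (τ j i)
              then f (x i) (g i) else 0) := fun σ₂ => Finset.sum_comm
    simp_rw [swap1]
    exact Finset.sum_comm
  rw [step2]
  -- claim 1: the inner double sum vanishes for non-injective g
  have claim1 : ∀ g : Fin n → L, ¬ Function.Injective g →
      (∑ σ₂ : Equiv.Perm (Fin n), ∑ τ : Fin m → Equiv.Perm (Fin n),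
        ((Equiv.Perm.sign σ₂ : ℤ) : R) * 𝓕 τ *
          ∏ i : Fin n, (if g i ≤ z (x i) ∧ g i ≤ x (σ₂ i) ∧ ∀ j, g i ≤ x (τ j i)
            then f (x i) (g i) else 0)) = 0 := by
    intro g hg
    obtain ⟨i₀, i₁, hgi, hne⟩ : ∃ a b, g a = g b ∧ a ≠ b := Function.not_injective_iff.1 hg
    rw [Finset.sum_comm]
    refine Finset.sum_eq_zero fun τ _ => ?_
    have hsplit : ∀ (σ₂ : Equiv.Perm (Fin n)) (i : Fin n),
        (if g i ≤ z (x i) ∧ g i ≤ x (σ₂ i) ∧ ∀ j, g i ≤ x (τ j i) then f (x i) (g i) else 0)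
        = (if g i ≤ x (σ₂ i) then (1 : R) else 0) *
          (if g i ≤ z (x i) ∧ ∀ j, g i ≤ x (τ j i) then f (x i) (g i) else 0) := by
      intro σ₂ i
      by_cases h1 : g i ≤ x (σ₂ i) <;>
        by_cases h2 : g i ≤ z (x i) ∧ ∀ j, g i ≤ x (τ j i) <;>
        simp [h1, h2] <;> tauto
    simp_rw [hsplit, Finset.prod_mul_distrib]
    have hdet : (∑ σ₂ : Equiv.Perm (Fin n),
        ((Equiv.Perm.sign σ₂ : ℤ) : R) * ∏ i : Fin n, (if g i ≤ x (σ₂ i) then (1 : R) else 0))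
        = 0 := by
      have h0 : (Matrix.of fun i j => if g i ≤ x j then (1 : R) else 0).det = 0 :=
        Matrix.det_zero_of_row_eq hne (funext fun j => by simp [hgi])
      calc (∑ σ₂ : Equiv.Perm (Fin n),
            ((Equiv.Perm.sign σ₂ : ℤ) : R) * ∏ i : Fin n, (if g i ≤ x (σ₂ i) then (1 : R) else 0))
          = (Matrix.of fun i j => if g i ≤ x j then (1 : R) else 0).transpose.det := by
            rw [Matrix.det_apply']
            rfl
        _ = 0 := by rw [Matrix.det_transpose, h0]
    calc (∑ σ₂ : Equiv.Perm (Fin n),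
          ((Equiv.Perm.sign σ₂ : ℤ) : R) * 𝓕 τ *
            ((∏ i : Fin n, (if g i ≤ x (σ₂ i) then (1 : R) else 0)) *
              ∏ i : Fin n, (if g i ≤ z (x i) ∧ ∀ j, g i ≤ x (τ j i) then f (x i) (g i) else 0)))
        = (𝓕 τ * ∏ i : Fin n,
            (if g i ≤ z (x i) ∧ ∀ j, g i ≤ x (τ j i) then f (x i) (g i) else 0)) *
          ∑ σ₂ : Equiv.Perm (Fin n),
            ((Equiv.Perm.sign σ₂ : ℤ) : R) *
              ∏ i : Fin n, (if g i ≤ x (σ₂ i) then (1 : R) else 0) := by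
          rw [Finset.mul_sum]
          exact Finset.sum_congr rfl fun σ₂ _ => by ring
      _ = 0 := by rw [hdet, mul_zero]
  -- key: injective g dominated by z ∘ x forces g = x and z = id
  have key : ∀ g : Fin n → L, Function.Injective g → (∀ i, g i ≤ z (x i)) →
      g = x ∧ ∀ w, z w = w := by
    intro g hginj hgle
    have hid : ∀ w, (g ∘ e.symm) w = w := by
      refine aux_fix (g ∘ e.symm) (hginj.comp e.symm.injective) fun w => ?_
      have h1 : g (e.symm w) ≤ z (x (e.symm w)) := hgle _
      have h2 : x (e.symm w) = w := e.apply_symm_apply w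
      exact (h1.trans (hz _)).trans_eq h2
    have hgx : g = x := by
      funext i
      have h1 := hid (x i)
      have h2 : e.symm (x i) = i := e.symm_apply_apply i
      rwa [Function.comp_apply, h2] at h1
    refine ⟨hgx, fun w => ?_⟩
    obtain ⟨i, rfl⟩ := hx.2 w
    exact le_antisymm (hz _) (hgx ▸ hgle i)
  -- a permutation sending each x i upward is the identity
  have perm_id : ∀ σ : Equiv.Perm (Fin n), (∀ i, x i ≤ x (σ i)) → σ = 1 := by
    intro σ hσ
    have hid : ∀ w, x (σ (e.symm w)) = w := by
      refine aux_fix_ge (fun w => x (σ (e.symm w)))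
        (hx.1.comp (σ.injective.comp e.symm.injective)) fun w => ?_
      have h2 : x (e.symm w) = w := e.apply_symm_apply w
      have h3 := hσ (e.symm w)
      rw [h2] at h3
      exact h3
    refine Equiv.ext fun i => ?_
    have h1 : x (σ (e.symm (x i))) = x i := hid (x i)
    have h2 : e.symm (x i) = i := e.symm_apply_apply i
    rw [h2] at h1
    simpa using hx.1 h1
  by_cases hzz : ∀ w, z w = w
  · rw [if_pos hzz]
    rw [Finset.sum_eq_single x ?side1 ?side2]
    · -- the g = x term
      have hterm : ∀ (σ₂ : Equiv.Perm (Fin n)) (τ : Fin m → Equiv.Perm (Fin n)),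
          ((Equiv.Perm.sign σ₂ : ℤ) : R) * 𝓕 τ *
            ∏ i : Fin n, (if x i ≤ z (x i) ∧ x i ≤ x (σ₂ i) ∧ ∀ j, x i ≤ x (τ j i)
              then f (x i) (x i) else 0) =
          if σ₂ = 1 then
            (if τ = (fun _ => 1) then 𝓕 (fun _ => 1) * ∏ i : Fin n, f (x i) (x i) else 0)
          else 0 := by
        intro σ₂ τ
        by_cases hστ : σ₂ = 1 ∧ τ = fun _ => 1
        · obtain ⟨h1, h2⟩ := hστ
          subst h1; subst h2
          rw [if_pos rfl, if_pos rfl]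
          have : ∀ i : Fin n,
              (if x i ≤ z (x i) ∧ x i ≤ x ((1 : Equiv.Perm (Fin n)) i) ∧
                  ∀ j : Fin m, x i ≤ x ((1 : Equiv.Perm (Fin n)) i)
                then f (x i) (x i) else 0) = f (x i) (x i) := by
            intro i
            rw [if_pos ⟨(hzz (x i)).ge, le_refl _, fun _ => le_refl _⟩]
          simp only [Equiv.Perm.coe_one, id_eq]
          rw [Finset.prod_congr rfl fun i _ => by
            exact if_pos ⟨(hzz (x i)).ge, le_refl _, fun _ => le_refl _⟩]
          simp
        · have hfail : ¬ ∀ i, x i ≤ z (x i) ∧ x i ≤ x (σ₂ i) ∧ ∀ j, x i ≤ x (τ j i) := by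
            intro hall
            refine hστ ⟨perm_id σ₂ fun i => (hall i).2.1, funext fun j => perm_id (τ j)
              fun i => (hall i).2.2 j⟩
          obtain ⟨i₂, hi₂⟩ := not_forall.1 hfail
          have hzero : (∏ i : Fin n, if x i ≤ z (x i) ∧ x i ≤ x (σ₂ i) ∧
              ∀ j, x i ≤ x (τ j i) then f (x i) (x i) else 0) = 0 :=
            Finset.prod_eq_zero (Finset.mem_univ i₂) (if_neg hi₂)
          rw [hzero, mul_zero]
          by_cases h1 : σ₂ = 1
          · rw [if_pos h1, if_neg fun h2 => hστ ⟨h1, h2⟩]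
          · rw [if_neg h1]
      simp_rw [hterm]
      have hinner : ∀ σ₂ : Equiv.Perm (Fin n),
          (∑ τ : Fin m → Equiv.Perm (Fin n), if σ₂ = 1 then
            (if τ = (fun _ => 1) then 𝓕 (fun _ => 1) * ∏ i : Fin n, f (x i) (x i) else 0)
          else 0) =
          if σ₂ = 1 then 𝓕 (fun _ => 1) * ∏ i : Fin n, f (x i) (x i) else 0 := by
        intro σ₂
        by_cases h1 : σ₂ = 1
        · simp only [if_pos h1]
          rw [Finset.sum_ite_eq' Finset.univ (fun _ => (1 : Equiv.Perm (Fin n)))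
            (fun _ => 𝓕 (fun _ => 1) * ∏ i : Fin n, f (x i) (x i)),
            if_pos (Finset.mem_univ _)]
        · simp [h1]
      simp_rw [hinner]
      rw [Finset.sum_ite_eq' Finset.univ (1 : Equiv.Perm (Fin n))
        (fun _ => 𝓕 (fun _ => 1) * ∏ i : Fin n, f (x i) (x i)),
        if_pos (Finset.mem_univ _)]
      congr 1
      exact Fintype.prod_bijective x hx _ _ fun i => rfl
    case side1 =>
      intro g _ hgx
      by_cases hginj : Function.Injective g
      · by_cases hgle : ∀ i, g i ≤ z (x i)
        · exact absurd (key g hginj hgle).1 hgx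
        · push_neg at hgle
          obtain ⟨i₀, hi₀⟩ := hgle
          refine Finset.sum_eq_zero fun σ₂ _ => Finset.sum_eq_zero fun τ _ => ?_
          have hzero : (∏ i : Fin n, if g i ≤ z (x i) ∧ g i ≤ x (σ₂ i) ∧
              ∀ j, g i ≤ x (τ j i) then f (x i) (g i) else 0) = 0 :=
            Finset.prod_eq_zero (Finset.mem_univ i₀) (if_neg fun h => hi₀ h.1)
          rw [hzero, mul_zero]
      · exact claim1 g hginj
    case side2 =>
      intro h
      exact absurd (Finset.mem_univ x) h
  · rw [if_neg hzz]
    refine Finset.sum_eq_zero fun g _ => ?_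
    by_cases hginj : Function.Injective g
    · by_cases hgle : ∀ i, g i ≤ z (x i)
      · exact absurd (key g hginj hgle).2 hzz
      · push_neg at hgle
        obtain ⟨i₀, hi₀⟩ := hgle
        refine Finset.sum_eq_zero fun σ₂ _ => Finset.sum_eq_zero fun τ _ => ?_
        have hzero : (∏ i : Fin n, if g i ≤ z (x i) ∧ g i ≤ x (σ₂ i) ∧
            ∀ j, g i ≤ x (τ j i) then f (x i) (g i) else 0) = 0 :=
          Finset.prod_eq_zero (Finset.mem_univ i₀) (if_neg fun h => hi₀ h.1)
        rw [hzero, mul_zero]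
    · exact claim1 g hginj
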